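/- arXiv:1005.5255 — 2 statements merged into one kernel-verified Lean document; each statement's English description precedes it below -/
import Mathlib

section
/- (Von Bahr–Esseen) For any p ∈ (1,2] there is a constant c_p such that for any independent real random variables V_1,...,V_n with E(V_i) = 0 and E|V_i|^p < ∞ for all i, E(|Σ_{i=1}^n V_i|^p) ≤ c_p · Σ_{i=1}^n E(|V_i|^p). -/
open MeasureTheory ProbabilityTheory

open Set

lemma vbe_rpow_subadd {a b q : ℝ} (ha : 0 ≤ a) (hb : 0 ≤ b) (hq0 : 0 ≤ q) (hq1 : q ≤ 1) :
    (a + b) ^ q ≤ a ^ q + b ^ q := by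
  have key := NNReal.rpow_add_le_add_rpow a.toNNReal b.toNNReal hq0 hq1
  calc (a + b) ^ q = ((a.toNNReal + b.toNNReal : NNReal) : ℝ) ^ q := by
        rw [NNReal.coe_add, Real.coe_toNNReal a ha, Real.coe_toNNReal b hb]
    _ = (((a.toNNReal + b.toNNReal) ^ q : NNReal) : ℝ) := by
        rw [NNReal.coe_rpow]
    _ ≤ ((a.toNNReal ^ q + b.toNNReal ^ q : NNReal) : ℝ) := NNReal.coe_le_coe.2 key
    _ = a ^ q + b ^ q := by
        rw [NNReal.coe_add, NNReal.coe_rpow, NNReal.coe_rpow,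
          Real.coe_toNNReal a ha, Real.coe_toNNReal b hb]

lemma vbe_abs_rpow_sub {a b q : ℝ} (ha : 0 ≤ a) (hb : 0 ≤ b) (hq0 : 0 ≤ q) (hq1 : q ≤ 1) :
    |a ^ q - b ^ q| ≤ |a - b| ^ q := by
  have key : ∀ u v : ℝ, 0 ≤ v → v ≤ u → u ^ q - v ^ q ≤ (u - v) ^ q := by
    intro u v hv huv
    have h := vbe_rpow_subadd (sub_nonneg.2 huv) hv hq0 hq1
    rw [sub_add_cancel] at h
    linarith
  rcases le_total b a with h | h
  · rw [abs_of_nonneg (sub_nonneg.2 (Real.rpow_le_rpow hb h hq0)),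
      abs_of_nonneg (sub_nonneg.2 h)]
    exact key a b hb h
  · rw [abs_of_nonpos (sub_nonpos.2 (Real.rpow_le_rpow ha h hq0)),
      abs_of_nonpos (sub_nonpos.2 h), neg_sub, neg_sub]
    exact key b a ha h

lemma vbe_hasDerivAt {p t : ℝ} (hp : 0 < p) (ht : t ≠ 0) :
    HasDerivAt (fun s => |s| ^ p) (p * Real.sign t * |t| ^ (p - 1)) t := by
  rcases ht.lt_or_gt with h | h
  · -- t < 0
    have hneg : HasDerivAt (fun s : ℝ => (-s) ^ p) (p * (-t) ^ (p - 1) * (-1)) t := by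
      have h1 : HasDerivAt (fun s : ℝ => -s) (-1) t := (hasDerivAt_neg t)
      have h2 : HasDerivAt (fun u : ℝ => u ^ p) (p * (-t) ^ (p - 1)) (-t) :=
        Real.hasDerivAt_rpow_const (Or.inl (by linarith))
      exact h2.comp t h1
    have heq : (fun s : ℝ => |s| ^ p) =ᶠ[nhds t] (fun s : ℝ => (-s) ^ p) := by
      filter_upwards [eventually_lt_nhds h] with s hs
      rw [abs_of_neg hs]
    have := hneg.congr_of_eventuallyEq heq
    have e : p * Real.sign t * |t| ^ (p - 1) = p * (-t) ^ (p - 1) * (-1) := by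
      rw [Real.sign_of_neg h, abs_of_neg h]
      ring
    rw [e]
    exact this
  · have hpos : HasDerivAt (fun s : ℝ => s ^ p) (p * t ^ (p - 1)) t :=
      Real.hasDerivAt_rpow_const (Or.inl (ne_of_gt h))
    have heq : (fun s : ℝ => |s| ^ p) =ᶠ[nhds t] (fun s : ℝ => s ^ p) := by
      filter_upwards [eventually_gt_nhds h] with s hs
      rw [abs_of_pos hs]
    have := hpos.congr_of_eventuallyEq heq
    have e : p * Real.sign t * |t| ^ (p - 1) = p * t ^ (p - 1) := by
      rw [Real.sign_of_pos h, abs_of_pos h]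
      ring
    rw [e]
    exact this

lemma vbe_sign_eq {x t : ℝ} (h : |t - x| < |x|) : Real.sign t = Real.sign x := by
  have hx : x ≠ 0 := by
    intro h0
    rw [h0, sub_zero, abs_zero] at h
    exact absurd h (abs_nonneg t).not_gt
  rcases hx.lt_or_gt with hneg | hpos
  · have : t < 0 := by
      have := abs_lt.1 h
      rw [abs_of_neg hneg] at this
      linarith [this.2]
    rw [Real.sign_of_neg this, Real.sign_of_neg hneg]
  · have : 0 < t := by
      have := abs_lt.1 h
      rw [abs_of_pos hpos] at this
      linarith [this.1]
    rw [Real.sign_of_pos this, Real.sign_of_pos hpos]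

lemma vbe_rpow_mul_self {y q : ℝ} (hy : y ≠ 0) : |y| ^ q * |y| = |y| ^ (q + 1) := by
  rw [Real.rpow_add (abs_pos.2 hy), Real.rpow_one]

lemma vbe_key {p : ℝ} (hp1 : 1 < p) (hp2 : p ≤ 2) (x y : ℝ) :
    |x + y| ^ p ≤ |x| ^ p + (p * Real.sign x * |x| ^ (p - 1)) * y + 13 * |y| ^ p := by
  have hp0 : 0 < p := by linarith
  have hq0 : 0 < p - 1 := by linarith
  have hq1 : p - 1 ≤ 1 := by linarith
  by_cases hy : y = 0
  · subst hy
    simp [Real.zero_rpow (ne_of_gt hp0)]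
  have hyabs : 0 < |y| := abs_pos.2 hy
  by_cases hxy : |x| ≤ 2 * |y|
  · -- |x| small compared to |y|
    have h1 : |x + y| ^ p ≤ 9 * |y| ^ p := by
      have ha : |x + y| ≤ 3 * |y| := by
        calc |x + y| ≤ |x| + |y| := abs_add_le x y
          _ ≤ 3 * |y| := by linarith
      calc |x + y| ^ p ≤ (3 * |y|) ^ p :=
            Real.rpow_le_rpow (abs_nonneg _) ha hp0.le
        _ = 3 ^ p * |y| ^ p := Real.mul_rpow (by norm_num) (abs_nonneg _)
        _ ≤ 9 * |y| ^ p := by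
            have : (3 : ℝ) ^ p ≤ 3 ^ (2 : ℝ) :=
              Real.rpow_le_rpow_of_exponent_le (by norm_num) hp2
            have h9 : (3 : ℝ) ^ (2 : ℝ) = 9 := by
              rw [show ((2 : ℝ) = ((2 : ℕ) : ℝ)) by norm_num, Real.rpow_natCast]; norm_num
            nlinarith [Real.rpow_nonneg (abs_nonneg y) p]
    have h2 : -((p * Real.sign x * |x| ^ (p - 1)) * y) ≤ 4 * |y| ^ p := by
      have hsign : |Real.sign x| ≤ 1 := by
        rcases Real.sign_apply_eq x with h | h | h <;> rw [h] <;> norm_num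
      have hx1 : |x| ^ (p - 1) ≤ 2 * |y| ^ (p - 1) := by
        calc |x| ^ (p - 1) ≤ (2 * |y|) ^ (p - 1) :=
              Real.rpow_le_rpow (abs_nonneg _) hxy hq0.le
          _ = 2 ^ (p - 1) * |y| ^ (p - 1) := Real.mul_rpow (by norm_num) (abs_nonneg _)
          _ ≤ 2 * |y| ^ (p - 1) := by
              have : (2 : ℝ) ^ (p - 1) ≤ 2 ^ (1 : ℝ) :=
                Real.rpow_le_rpow_of_exponent_le (by norm_num) hq1
              rw [Real.rpow_one] at this
              nlinarith [Real.rpow_nonneg (abs_nonneg y) (p - 1)]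
      have habs : |(p * Real.sign x * |x| ^ (p - 1)) * y| ≤ 4 * |y| ^ p := by
        rw [abs_mul, abs_mul, abs_mul]
        have h3 : |p| = p := abs_of_pos hp0
        have h4 : |(|x| ^ (p - 1))| = |x| ^ (p - 1) :=
          abs_of_nonneg (Real.rpow_nonneg (abs_nonneg _) _)
        rw [h3, h4]
        have h5 : |x| ^ (p - 1) * |y| ≤ 2 * |y| ^ p := by
          have := mul_le_mul_of_nonneg_right hx1 (abs_nonneg y)
          calc |x| ^ (p - 1) * |y| ≤ 2 * |y| ^ (p - 1) * |y| := this
            _ = 2 * (|y| ^ (p - 1) * |y|) := by ring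
            _ = 2 * |y| ^ p := by rw [vbe_rpow_mul_self hy]; ring_nf
        have hr : (0 : ℝ) ≤ |x| ^ (p - 1) := Real.rpow_nonneg (abs_nonneg _) _
        have hry : (0 : ℝ) ≤ |x| ^ (p - 1) * |y| := mul_nonneg hr (abs_nonneg y)
        have e1 : p * |Real.sign x| ≤ p := by nlinarith
        calc p * |Real.sign x| * |x| ^ (p - 1) * |y|
            = (p * |Real.sign x|) * (|x| ^ (p - 1) * |y|) := by ring
          _ ≤ p * (|x| ^ (p - 1) * |y|) := mul_le_mul_of_nonneg_right e1 hry
          _ ≤ 2 * (2 * |y| ^ p) := mul_le_mul hp2 h5 hry (by norm_num)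
          _ = 4 * |y| ^ p := by ring
      linarith [neg_abs_le ((p * Real.sign x * |x| ^ (p - 1)) * y), abs_le.1 habs]
    have h0 : (0 : ℝ) ≤ |x| ^ p := Real.rpow_nonneg (abs_nonneg _) _
    linarith
  · -- 2|y| < |x| : use the mean value theorem
    push_neg at hxy
    have hx0 : x ≠ 0 := by
      intro h; rw [h, abs_zero] at hxy; linarith
    -- helper facts
    have hcont : Continuous fun s : ℝ => |s| ^ p :=
      continuous_abs.rpow_const fun s => Or.inr hp0.le
    -- get ξ with  |x+y|^p = |x|^p + g'(ξ) * y
    have hMVT : ∃ ξ : ℝ, |ξ - x| < |y| ∧ ξ ≠ 0 ∧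
        |x + y| ^ p = |x| ^ p + (p * Real.sign ξ * |ξ| ^ (p - 1)) * y := by
      have hne : ∀ t : ℝ, |t - x| < |y| → t ≠ 0 := by
        intro t ht h0
        rw [h0, zero_sub, abs_neg] at ht
        linarith
      rcases Ne.lt_or_gt hy with hyneg | hypos
      · have hab : x + y < x := by linarith
        obtain ⟨ξ, hξ, hslope⟩ := exists_hasDerivAt_eq_slope (fun s => |s| ^ p)
          (fun t => p * Real.sign t * |t| ^ (p - 1)) hab (hcont.continuousOn)
          (fun t ht => by
            refine vbe_hasDerivAt hp0 (hne t ?_)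
            rw [abs_sub_lt_iff, abs_of_neg hyneg]
            constructor <;> linarith [ht.1, ht.2])
        refine ⟨ξ, ?_, hne ξ ?_, ?_⟩
        · rw [abs_sub_lt_iff, abs_of_neg hyneg]
          constructor <;> linarith [hξ.1, hξ.2]
        · rw [abs_sub_lt_iff, abs_of_neg hyneg]
          constructor <;> linarith [hξ.1, hξ.2]
        · have hden : x - (x + y) = -y := by ring
          rw [hden, eq_div_iff (neg_ne_zero.2 hy)] at hslope
          linear_combination hslope
      · have hab : x < x + y := by linarith
        obtain ⟨ξ, hξ, hslope⟩ := exists_hasDerivAt_eq_slope (fun s => |s| ^ p)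
          (fun t => p * Real.sign t * |t| ^ (p - 1)) hab (hcont.continuousOn)
          (fun t ht => by
            refine vbe_hasDerivAt hp0 (hne t ?_)
            rw [abs_sub_lt_iff, abs_of_pos hypos]
            constructor <;> linarith [ht.1, ht.2])
        refine ⟨ξ, ?_, hne ξ ?_, ?_⟩
        · rw [abs_sub_lt_iff, abs_of_pos hypos]
          constructor <;> linarith [hξ.1, hξ.2]
        · rw [abs_sub_lt_iff, abs_of_pos hypos]
          constructor <;> linarith [hξ.1, hξ.2]
        · have hden : x + y - x = y := by ring
          rw [hden, eq_div_iff hy] at hslope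
          linear_combination -hslope
    obtain ⟨ξ, hξx, hξ0, hval⟩ := hMVT
    have hsign : Real.sign ξ = Real.sign x := vbe_sign_eq (by linarith)
    -- bound the difference of derivatives
    have hdiff : |(p * Real.sign ξ * |ξ| ^ (p - 1)) * y -
        (p * Real.sign x * |x| ^ (p - 1)) * y| ≤ 2 * |y| ^ p := by
      have h1 : |(|ξ| ^ (p - 1) - |x| ^ (p - 1))| ≤ |y| ^ (p - 1) := by
        calc |(|ξ| ^ (p - 1) - |x| ^ (p - 1))| ≤ |(|ξ| - |x|)| ^ (p - 1) :=
              vbe_abs_rpow_sub (abs_nonneg _) (abs_nonneg _) hq0.le hq1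
          _ ≤ |y| ^ (p - 1) := by
              refine Real.rpow_le_rpow (abs_nonneg _) ?_ hq0.le
              calc |(|ξ| - |x|)| ≤ |ξ - x| := abs_abs_sub_abs_le_abs_sub _ _
                _ ≤ |y| := hξx.le
      have hsign1 : |Real.sign x| ≤ 1 := by
        rcases Real.sign_apply_eq x with h | h | h <;> rw [h] <;> norm_num
      calc |(p * Real.sign ξ * |ξ| ^ (p - 1)) * y - (p * Real.sign x * |x| ^ (p - 1)) * y|
          = p * |Real.sign x| * (|(|ξ| ^ (p - 1) - |x| ^ (p - 1))| * |y|) := by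
            rw [hsign]
            rw [show (p * Real.sign x * |ξ| ^ (p - 1)) * y -
              (p * Real.sign x * |x| ^ (p - 1)) * y
              = (p * Real.sign x) * ((|ξ| ^ (p - 1) - |x| ^ (p - 1)) * y) by ring]
            rw [abs_mul, abs_mul, abs_mul, abs_of_pos hp0]
            try ring
        _ ≤ p * 1 * (|y| ^ (p - 1) * |y|) := by
            have hmul : |(|ξ| ^ (p - 1) - |x| ^ (p - 1))| * |y| ≤ |y| ^ (p - 1) * |y| :=
              mul_le_mul_of_nonneg_right h1 (abs_nonneg _)
            have hnn : (0 : ℝ) ≤ |(|ξ| ^ (p - 1) - |x| ^ (p - 1))| * |y| := by positivity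
            have e1 : p * |Real.sign x| ≤ p * 1 := by nlinarith [hsign1]
            exact mul_le_mul e1 hmul hnn (by linarith)
        _ = p * |y| ^ p := by
            rw [vbe_rpow_mul_self hy]; ring_nf
        _ ≤ 2 * |y| ^ p := by
            nlinarith [Real.rpow_nonneg (abs_nonneg y) p]
    have h2 := (abs_le.1 hdiff).2
    have h13 : 2 * |y| ^ p ≤ 13 * |y| ^ p := by
      nlinarith [Real.rpow_nonneg (abs_nonneg y) p]
    linarith [hval]

lemma vbe_measurable_sign : Measurable Real.sign := by
  have : Real.sign = fun r : ℝ => if r < 0 then (-1 : ℝ) else if 0 < r then 1 else 0 := by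
    funext r
    rcases lt_trichotomy r 0 with h | h | h
    · rw [Real.sign_of_neg h, if_pos h]
    · subst h; rw [Real.sign_zero, if_neg (lt_irrefl _), if_neg (lt_irrefl _)]
    · rw [Real.sign_of_pos h, if_neg (by linarith), if_pos h]
  rw [this]
  exact Measurable.ite (measurableSet_lt measurable_id measurable_const) measurable_const
    (Measurable.ite (measurableSet_lt measurable_const measurable_id)
      measurable_const measurable_const)

lemma vbe_two_bound {p a b : ℝ} (hp : 0 ≤ p) (ha : 0 ≤ a) (hb : 0 ≤ b) :
    (a + b) ^ p ≤ 2 ^ p * (a ^ p + b ^ p) := by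
  have key : ∀ u v : ℝ, 0 ≤ u → u ≤ v → (u + v) ^ p ≤ 2 ^ p * (u ^ p + v ^ p) := by
    intro u v hu huv
    have hv : 0 ≤ v := hu.trans huv
    calc (u + v) ^ p ≤ (2 * v) ^ p :=
          Real.rpow_le_rpow (by linarith) (by linarith) hp
      _ = 2 ^ p * v ^ p := Real.mul_rpow (by norm_num) hv
      _ ≤ 2 ^ p * (u ^ p + v ^ p) := by
          have h2 : (0 : ℝ) ≤ 2 ^ p := Real.rpow_nonneg (by norm_num) p
          have hu2 : (0 : ℝ) ≤ u ^ p := Real.rpow_nonneg hu p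
          nlinarith
  rcases le_total a b with h | h
  · exact key a b ha h
  · have := key b a hb h
    rw [add_comm a b, add_comm (a ^ p) (b ^ p)]
    exact this

lemma vbe_pow_pred_le {p t : ℝ} (hp1 : 1 < p) :
    |t| ^ (p - 1) ≤ 1 + |t| ^ p := by
  rcases le_total |t| 1 with h | h
  · have : |t| ^ (p - 1) ≤ 1 := Real.rpow_le_one (abs_nonneg t) h (by linarith)
    have h0 : (0 : ℝ) ≤ |t| ^ p := Real.rpow_nonneg (abs_nonneg t) p
    linarith
  · have : |t| ^ (p - 1) ≤ |t| ^ p :=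
      Real.rpow_le_rpow_of_exponent_le h (by linarith)
    linarith

lemma vbe_step {p : ℝ} (hp1 : 1 < p) (hp2 : p ≤ 2)
    {Ω : Type} [MeasurableSpace Ω] {P : Measure Ω} [IsProbabilityMeasure P]
    {X Y : Ω → ℝ} (hX : Measurable X) (hY : Measurable Y)
    (hind : IndepFun X Y P) (hYint : Integrable Y P) (hY0 : (∫ ω, Y ω ∂P) = 0)
    (hXp : Integrable (fun ω => |X ω| ^ p) P) (hYp : Integrable (fun ω => |Y ω| ^ p) P) :
    Integrable (fun ω => |X ω + Y ω| ^ p) P ∧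
      (∫ ω, |X ω + Y ω| ^ p ∂P) ≤
        (∫ ω, |X ω| ^ p ∂P) + 13 * ∫ ω, |Y ω| ^ p ∂P := by
  have hp0 : 0 < p := by linarith
  -- measurability of t ↦ |t| ^ p and t ↦ |t| ^ (p-1)
  have hmp : ∀ q : ℝ, 0 ≤ q → Measurable (fun t : ℝ => |t| ^ q) := fun q hq =>
    (continuous_abs.rpow_const fun s => Or.inr hq).measurable
  -- the derivative-type function
  set g : ℝ → ℝ := fun t => p * Real.sign t * |t| ^ (p - 1) with hg
  have hgm : Measurable g :=
    ((measurable_const.mul vbe_measurable_sign).mul (hmp (p - 1) (by linarith)))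
  set φ : Ω → ℝ := fun ω => g (X ω) with hφ
  have hφm : Measurable φ := hgm.comp hX
  -- integrability of φ
  have hφint : Integrable φ P := by
    refine Integrable.mono ((hXp.add (integrable_const 1)).const_mul p) hφm.aestronglyMeasurable ?_
    filter_upwards with ω
    have h1 : |Real.sign (X ω)| ≤ 1 := by
      rcases Real.sign_apply_eq (X ω) with h | h | h <;> rw [h] <;> norm_num
    have h2 : (0 : ℝ) ≤ |X ω| ^ (p - 1) := Real.rpow_nonneg (abs_nonneg _) _
    have h3 := vbe_pow_pred_le (t := X ω) hp1
    have h4 : (0 : ℝ) ≤ |X ω| ^ p := Real.rpow_nonneg (abs_nonneg _) _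
    simp only [hφ, hg, Real.norm_eq_abs]
    rw [abs_mul, abs_mul, abs_of_pos hp0,
      abs_of_nonneg h2]
    have : p * |Real.sign (X ω)| * |X ω| ^ (p - 1) ≤ p * (|X ω| ^ p + 1) := by
      nlinarith [mul_le_mul_of_nonneg_left h3 hp0.le,
        mul_le_mul_of_nonneg_right (mul_le_mul_of_nonneg_left h1 hp0.le) h2]
    calc p * |Real.sign (X ω)| * |X ω| ^ (p - 1)
        ≤ p * (|X ω| ^ p + 1) := this
      _ ≤ |p * (|X ω| ^ p + 1)| := le_abs_self _
    -- norm of RHS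
  -- independence of φ and Y
  have hφY : IndepFun φ Y P := hind.comp hgm measurable_id
  have hφYint : Integrable (fun ω => φ ω * Y ω) P := hφY.integrable_mul hφint hYint
  have hφYzero : (∫ ω, φ ω * Y ω ∂P) = 0 := by
    have := hφY.integral_mul_eq_mul_integral hφint.aestronglyMeasurable hYint.aestronglyMeasurable
    calc (∫ ω, φ ω * Y ω ∂P) = (∫ ω, φ ω ∂P) * ∫ ω, Y ω ∂P := this
      _ = 0 := by rw [hY0, mul_zero]
  -- integrability of |X + Y| ^ p
  have hsum_int : Integrable (fun ω => |X ω + Y ω| ^ p) P := by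
    refine Integrable.mono ((hXp.add hYp).const_mul (2 ^ p))
      ((hmp p hp0.le).comp (hX.add hY)).aestronglyMeasurable ?_
    filter_upwards with ω
    simp only [Real.norm_eq_abs]
    have h1 : |X ω + Y ω| ^ p ≤ 2 ^ p * (|X ω| ^ p + |Y ω| ^ p) := by
      calc |X ω + Y ω| ^ p ≤ (|X ω| + |Y ω|) ^ p :=
            Real.rpow_le_rpow (abs_nonneg _) (abs_add_le _ _) hp0.le
        _ ≤ 2 ^ p * (|X ω| ^ p + |Y ω| ^ p) :=
            vbe_two_bound hp0.le (abs_nonneg _) (abs_nonneg _)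
    have h2 : (0 : ℝ) ≤ |X ω + Y ω| ^ p := Real.rpow_nonneg (abs_nonneg _) _
    rw [abs_of_nonneg h2]
    exact h1.trans (le_abs_self _)
  refine ⟨hsum_int, ?_⟩
  -- pointwise bound and integration
  have hptwise : ∀ ω, |X ω + Y ω| ^ p ≤
      |X ω| ^ p + φ ω * Y ω + 13 * |Y ω| ^ p := fun ω =>
    vbe_key hp1 hp2 (X ω) (Y ω)
  have hRHSint : Integrable (fun ω => |X ω| ^ p + φ ω * Y ω + 13 * |Y ω| ^ p) P :=
    (hXp.add hφYint).add (hYp.const_mul 13)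
  have hmono := integral_mono hsum_int hRHSint hptwise
  have hfint : Integrable (fun ω => |X ω| ^ p + φ ω * Y ω) P := hXp.add hφYint
  have hgint : Integrable (fun ω => 13 * |Y ω| ^ p) P := hYp.const_mul 13
  rw [integral_add hfint hgint, integral_add hXp hφYint, hφYzero,
    integral_const_mul] at hmono
  linarith [hmono]

lemma vbe_induction {p : ℝ} (hp1 : 1 < p) (hp2 : p ≤ 2)
    {Ω : Type} [MeasurableSpace Ω] {P : Measure Ω} [IsProbabilityMeasure P]
    {n : ℕ} {V : Fin n → Ω → ℝ} (hmeas : ∀ i, Measurable (V i))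
    (hindep : iIndepFun V P)
    (hint : ∀ i, Integrable (V i) P) (hzero : ∀ i, (∫ ω, V i ω ∂P) = 0)
    (hp : ∀ i, Integrable (fun ω => |V i ω| ^ p) P) (s : Finset (Fin n)) :
    Integrable (fun ω => |∑ i ∈ s, V i ω| ^ p) P ∧
      (∫ ω, |∑ i ∈ s, V i ω| ^ p ∂P) ≤ 13 * ∑ i ∈ s, ∫ ω, |V i ω| ^ p ∂P := by
  classical
  induction s using Finset.induction_on with
  | empty =>
      simp only [Finset.sum_empty, abs_zero, Real.zero_rpow (by positivity : p ≠ 0)]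
      exact ⟨integrable_const 0, by simp⟩
  | insert i s hi ih =>
      obtain ⟨ihint, ihle⟩ := ih
      have hXmeas : Measurable (fun ω => ∑ j ∈ s, V j ω) := by
        exact Finset.measurable_sum s fun j _ => hmeas j
      have hindXY : IndepFun (fun ω => ∑ j ∈ s, V j ω) (V i) P := by
        have h := hindep.indepFun_finsetSum_of_notMem hmeas hi
        have he : (∑ j ∈ s, V j) = fun ω => ∑ j ∈ s, V j ω := by
          funext ω; simp [Finset.sum_apply]
        rwa [he] at h
      obtain ⟨hint2, hle2⟩ := vbe_step hp1 hp2 hXmeas (hmeas i) hindXY (hint i)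
        (hzero i) ihint (hp i)
      have hrw : ∀ ω, ∑ j ∈ insert i s, V j ω = (∑ j ∈ s, V j ω) + V i ω := by
        intro ω; rw [Finset.sum_insert hi]; ring
      constructor
      · refine hint2.congr ?_
        filter_upwards with ω
        rw [hrw ω]
      · have heq : (∫ ω, |∑ j ∈ insert i s, V j ω| ^ p ∂P)
            = ∫ ω, |(∑ j ∈ s, V j ω) + V i ω| ^ p ∂P := by
          refine integral_congr_ae ?_
          filter_upwards with ω
          rw [hrw ω]
        rw [heq, Finset.sum_insert hi]
        have h13 : (0:ℝ) ≤ 13 := by norm_num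
        calc (∫ ω, |(∑ j ∈ s, V j ω) + V i ω| ^ p ∂P)
            ≤ (∫ ω, |∑ j ∈ s, V j ω| ^ p ∂P) + 13 * ∫ ω, |V i ω| ^ p ∂P := hle2
          _ ≤ 13 * (∑ j ∈ s, ∫ ω, |V j ω| ^ p ∂P) + 13 * ∫ ω, |V i ω| ^ p ∂P := by
              linarith
          _ = 13 * ((∫ ω, |V i ω| ^ p ∂P) + ∑ j ∈ s, ∫ ω, |V j ω| ^ p ∂P) := by ring

lemma vbe_iIndepFun_congr {Ω : Type} [MeasurableSpace Ω] {P : Measure Ω}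
    {n : ℕ} {f g : Fin n → Ω → ℝ} (hfg : ∀ i, f i =ᵐ[P] g i)
    (hf : iIndepFun f P) :
    iIndepFun g P := by
  rw [iIndepFun_iff_measure_inter_preimage_eq_mul] at hf ⊢
  intro S sets hsets
  have hae : ∀ᵐ ω ∂P, ∀ i, f i ω = g i ω := ae_all_iff.2 hfg
  have h2 : ((⋂ i ∈ S, g i ⁻¹' sets i) : Set Ω) =ᵐ[P] (⋂ i ∈ S, f i ⁻¹' sets i) := by
    rw [Filter.eventuallyEq_set]
    filter_upwards [hae] with ω hω
    simp only [Set.mem_iInter, Set.mem_preimage]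
    constructor
    · intro h i hi; rw [hω i]; exact h i hi
    · intro h i hi; rw [← hω i]; exact h i hi
  rw [measure_congr h2, hf S hsets]
  refine Finset.prod_congr rfl fun i hi => ?_
  refine measure_congr ?_
  rw [Filter.eventuallyEq_set]
  filter_upwards [hfg i] with ω hω
  simp only [Set.mem_preimage, hω]

/-- Von Bahr–Esseen inequality: for `p ∈ (1,2]` there is a constant `c_p` such that for any
independent centered real random variables `V₁,…,V_n` with finite `p`-th moments,
`E|Σ V_i|^p ≤ c_p Σ E|V_i|^p`. -/
theorem stmt_12 (p : ℝ) (hp1 : 1 < p) (hp2 : p ≤ 2) :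
    ∃ c : ℝ, 0 < c ∧
      ∀ (Ω : Type) [MeasurableSpace Ω] (P : Measure Ω), IsProbabilityMeasure P →
      ∀ (n : ℕ) (V : Fin n → Ω → ℝ),
        iIndepFun V P →
        (∀ i, Integrable (V i) P) →
        (∀ i, (∫ ω, V i ω ∂P) = 0) →
        (∀ i, Integrable (fun ω => |V i ω| ^ p) P) →
        (∫ ω, |∑ i, V i ω| ^ p ∂P) ≤ c * ∑ i, ∫ ω, |V i ω| ^ p ∂P := by
  refine ⟨13, by norm_num, ?_⟩
  intro Ω _ P hP n V hindep hint hzero hmom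
  haveI := hP
  -- replace V by measurable modifications
  set W : Fin n → Ω → ℝ := fun i => AEMeasurable.mk (V i) (hint i).aemeasurable with hW
  have hWmeas : ∀ i, Measurable (W i) := fun i => (hint i).aemeasurable.measurable_mk
  have hVW : ∀ i, V i =ᵐ[P] W i := fun i => (hint i).aemeasurable.ae_eq_mk
  have hWindep : iIndepFun W P := vbe_iIndepFun_congr hVW hindep
  have hWint : ∀ i, Integrable (W i) P := fun i => (hint i).congr (hVW i)
  have hWzero : ∀ i, (∫ ω, W i ω ∂P) = 0 := fun i => by
    rw [← integral_congr_ae (hVW i)]; exact hzero i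
  have hWmom : ∀ i, Integrable (fun ω => |W i ω| ^ p) P := fun i => by
    refine (hmom i).congr ?_
    filter_upwards [hVW i] with ω hω
    rw [hω]
  obtain ⟨_, hle⟩ := vbe_induction hp1 hp2 hWmeas hWindep hWint hWzero hWmom Finset.univ
  have hsum : (∫ ω, |∑ i, V i ω| ^ p ∂P) = ∫ ω, |∑ i, W i ω| ^ p ∂P := by
    refine integral_congr_ae ?_
    filter_upwards [ae_all_iff.2 hVW] with ω hω
    rw [Finset.sum_congr rfl fun i _ => hω i]
  have hsum2 : ∀ i, (∫ ω, |V i ω| ^ p ∂P) = ∫ ω, |W i ω| ^ p ∂P := fun i => by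
    refine integral_congr_ae ?_
    filter_upwards [hVW i] with ω hω
    rw [hω]
  rw [hsum, Finset.sum_congr rfl fun i _ => hsum2 i]
  exact hle
end

section
/- For s < t in [0,1) and b ≥ 2, let j ≥ 0 be the unique integer such that the b-adic words of s and t satisfy s|_j⁺ = t|_j and s|_{j+1}⁺ ≠ t|_{j+1} (where w⁺ denotes the b-adic successor of the word w at the same generation). Then b^{-(j+1)} ≤ t − s ≤ 2b^{-j}. -/
/-- For `s < t` in `[0,1)`, if `j` is the generation at which the `b`-adic word of `t` is the
successor of that of `s` (encoded by `⌊s·b^j⌋ + 1 = ⌊t·b^j⌋`) while at generation `j+1` the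
word of `t` is not the successor of that of `s`, then `b^{-(j+1)} ≤ t - s ≤ 2·b^{-j}`.
Here the word `x|_n` of length `n` of `x` is encoded by the integer `⌊x·b^n⌋`, and the
successor word `w⁺` corresponds to adding `1` to this integer. -/
theorem stmt_17 (b : ℕ) (hb : 2 ≤ b) (s t : ℝ) (hs : s ∈ Set.Ico (0 : ℝ) 1)
    (ht : t ∈ Set.Ico (0 : ℝ) 1) (hst : s < t) (j : ℕ)
    (hj : ⌊s * (b : ℝ) ^ j⌋ + 1 = ⌊t * (b : ℝ) ^ j⌋)
    (hj1 : ⌊s * (b : ℝ) ^ (j + 1)⌋ + 1 ≠ ⌊t * (b : ℝ) ^ (j + 1)⌋) :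
    (b : ℝ) ^ (-(j + 1 : ℤ)) ≤ t - s ∧ t - s ≤ 2 * (b : ℝ) ^ (-(j : ℤ)) := by
  have hB : (2 : ℝ) ≤ (b : ℝ) := by exact_mod_cast hb
  have hBpos : (0 : ℝ) < (b : ℝ) := by linarith
  have hpj : (0 : ℝ) < (b : ℝ) ^ j := pow_pos hBpos j
  have hpj1 : (0 : ℝ) < (b : ℝ) ^ (j + 1) := pow_pos hBpos (j + 1)
  -- key integer inequality at level j+1
  have h1 : (b : ℤ) * ⌊t * (b : ℝ) ^ j⌋ ≤ ⌊t * (b : ℝ) ^ (j + 1)⌋ := by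
    rw [Int.le_floor]
    push_cast
    have := Int.floor_le (t * (b : ℝ) ^ j)
    have h : ((⌊t * (b : ℝ) ^ j⌋ : ℝ)) * (b : ℝ) ≤ t * (b : ℝ) ^ j * (b : ℝ) :=
      mul_le_mul_of_nonneg_right this (le_of_lt hBpos)
    calc (b : ℝ) * (⌊t * (b : ℝ) ^ j⌋ : ℝ) = (⌊t * (b : ℝ) ^ j⌋ : ℝ) * (b : ℝ) := by ring
    _ ≤ t * (b : ℝ) ^ j * (b : ℝ) := h
    _ = t * (b : ℝ) ^ (j + 1) := by ring
  have h2 : ⌊s * (b : ℝ) ^ (j + 1)⌋ < (⌊s * (b : ℝ) ^ j⌋ + 1) * (b : ℤ) := by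
    rw [Int.floor_lt]
    push_cast
    have := Int.lt_floor_add_one (s * (b : ℝ) ^ j)
    calc s * (b : ℝ) ^ (j + 1) = (s * (b : ℝ) ^ j) * (b : ℝ) := by ring
    _ < ((⌊s * (b : ℝ) ^ j⌋ : ℝ) + 1) * (b : ℝ) :=
        mul_lt_mul_of_pos_right this hBpos
    _ = ((⌊s * (b : ℝ) ^ j⌋ : ℝ) + 1) * (b : ℝ) := by ring
  have h3 : ⌊s * (b : ℝ) ^ (j + 1)⌋ + 1 ≤ ⌊t * (b : ℝ) ^ (j + 1)⌋ := by
    have : (⌊s * (b : ℝ) ^ j⌋ + 1) * (b : ℤ) = (b : ℤ) * ⌊t * (b : ℝ) ^ j⌋ := by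
      rw [hj]; ring
    omega
  have h4 : ⌊s * (b : ℝ) ^ (j + 1)⌋ + 2 ≤ ⌊t * (b : ℝ) ^ (j + 1)⌋ := by omega
  constructor
  · -- lower bound
    have hlow : 1 < (t - s) * (b : ℝ) ^ (j + 1) := by
      have ha : ((⌊t * (b : ℝ) ^ (j + 1)⌋ : ℝ)) ≤ t * (b : ℝ) ^ (j + 1) :=
        Int.floor_le _
      have hc : s * (b : ℝ) ^ (j + 1) < (⌊s * (b : ℝ) ^ (j + 1)⌋ : ℝ) + 1 :=
        Int.lt_floor_add_one _
      have h4' : ((⌊s * (b : ℝ) ^ (j + 1)⌋ : ℝ)) + 2 ≤ (⌊t * (b : ℝ) ^ (j + 1)⌋ : ℝ) := by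
        exact_mod_cast h4
      nlinarith
    have heq : (b : ℝ) ^ (-(j + 1 : ℤ)) = ((b : ℝ) ^ (j + 1))⁻¹ := by
      rw [zpow_neg]
      norm_cast
    rw [heq, inv_le_iff_one_le_mul₀ hpj1]
    nlinarith
  · -- upper bound
    have hup : (t - s) * (b : ℝ) ^ j < 2 := by
      have ha : t * (b : ℝ) ^ j < (⌊t * (b : ℝ) ^ j⌋ : ℝ) + 1 := Int.lt_floor_add_one _
      have hc : ((⌊s * (b : ℝ) ^ j⌋ : ℝ)) ≤ s * (b : ℝ) ^ j := Int.floor_le _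
      have hj' : ((⌊s * (b : ℝ) ^ j⌋ : ℝ)) + 1 = (⌊t * (b : ℝ) ^ j⌋ : ℝ) := by
        exact_mod_cast hj
      nlinarith
    have heq : (b : ℝ) ^ (-(j : ℤ)) = ((b : ℝ) ^ j)⁻¹ := by
      rw [zpow_neg]
      norm_cast
    rw [heq, show (2:ℝ) * ((b:ℝ)^j)⁻¹ = 2 / (b:ℝ)^j from by ring, le_div_iff₀ hpj]
    linarith
end
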